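/- Let n ≥ 2, let f be a real polynomial of degree n, let x and y be positive integers with y < x, and let 1 ≤ k ≤ n−1. Then |Σ_{x−y < m ≤ x} e(f(m))|^{2^k} ≤ (2y)^{2^k − k − 1} · Σ_{|h₁| < y} ⋯ Σ_{|h_k| < y} |Σ_{m ∈ I_k(x,y; h₁,…,h_k)} e(Δ_k(f(m); h₁, …, h_k))|, where h₁, …, h_k run over integers with |h_i| < y and I_k(x, y; h₁, …, h_k) := ∩_{S ⊆ {1,…,k}} {m ∈ ℤ : x − Σ_{i∈S} h_i − y < m ≤ x − Σ_{i∈S} h_i}. -/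

import Mathlib

open Finset

/-- `e t = exp(2πi t)`. -/
noncomputable def e (t : ℝ) : ℂ := Complex.exp (2 * Real.pi * Complex.I * t)

/-- Iterated finite difference: `diffk k f h` is `Δ_k(f; h₁, …, h_k)`. -/
def diffk : (k : ℕ) → (ℝ → ℝ) → (Fin k → ℝ) → (ℝ → ℝ)
  | 0, f, _ => f
  | k + 1, f, h => fun u =>
      diffk k f (fun i => h i.castSucc) (u + h (Fin.last k)) -
        diffk k f (fun i => h i.castSucc) u

/-- `I_k(x, y; h₁, …, h_k) = ⋂_{S ⊆ {1,…,k}} {m : x − Σ_{i∈S} h_i − y < m ≤ x − Σ_{i∈S} h_i}`. -/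
noncomputable def Ik (x y : ℕ) (k : ℕ) (h : Fin k → ℤ) : Finset ℤ :=
  (Finset.univ : Finset (Fin k)).powerset.inf' (Finset.powerset_nonempty _)
    (fun S : Finset (Fin k) =>
      Finset.Ioc ((x : ℤ) - (∑ i ∈ S, h i) - y) ((x : ℤ) - ∑ i ∈ S, h i))

lemma e_mul_conj (s t : ℝ) : e s * (starRingEnd ℂ) (e t) = e (s - t) := by
  unfold e
  rw [← Complex.exp_conj, ← Complex.exp_add]
  congr 1
  push_cast
  simp [map_mul, Complex.conj_I, Complex.conj_ofReal, map_ofNat]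
  ring

lemma mem_Ik {x y k : ℕ} {h : Fin k → ℤ} {m : ℤ} :
    m ∈ Ik x y k h ↔ ∀ S : Finset (Fin k),
      m ∈ Finset.Ioc ((x : ℤ) - (∑ i ∈ S, h i) - y) ((x : ℤ) - ∑ i ∈ S, h i) := by
  constructor
  · intro hm S
    have := Finset.inf'_le (fun S : Finset (Fin k) =>
      Finset.Ioc ((x : ℤ) - (∑ i ∈ S, h i) - y) ((x : ℤ) - ∑ i ∈ S, h i))
      (Finset.mem_powerset.2 (Finset.subset_univ S))
    exact this hm
  · intro hm
    have : ({m} : Finset ℤ) ≤ Ik x y k h := by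
      apply Finset.le_inf'
      intro S _
      exact Finset.singleton_subset_iff.2 (hm S)
    exact Finset.singleton_subset_iff.1 this

lemma Ik_zero (x y : ℕ) (h : Fin 0 → ℤ) : Ik x y 0 h = Finset.Ioc ((x:ℤ) - y) (x:ℤ) := by
  ext m
  rw [mem_Ik]
  constructor
  · intro H; simpa using H ∅
  · intro H S
    rw [Subsingleton.elim S ∅]
    simpa using H

lemma Ik_subset (x y k : ℕ) (h : Fin k → ℤ) :
    Ik x y k h ⊆ Finset.Ioc ((x : ℤ) - y) (((x : ℤ) - y) + y) := by
  intro m hm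
  have := mem_Ik.1 hm ∅
  simp only [Finset.sum_empty, Finset.mem_Ioc] at this ⊢
  omega

lemma map_castSuccEmb_filter (k : ℕ) (S : Finset (Fin (k + 1))) :
    (Finset.univ.filter (fun i : Fin k => i.castSucc ∈ S)).map Fin.castSuccEmb
      = S.erase (Fin.last k) := by
  ext i
  simp only [Finset.mem_map, Finset.mem_filter, Finset.mem_univ, true_and, Finset.mem_erase,
    Fin.castSuccEmb]
  constructor
  · rintro ⟨j, hj, rfl⟩
    exact ⟨(Fin.castSucc_lt_last j).ne, hj⟩
  · rintro ⟨hne, hi⟩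
    obtain ⟨j, rfl⟩ := Fin.exists_castSucc_eq.2 hne
    exact ⟨j, hi, rfl⟩

lemma Ik_succ (x y k : ℕ) (h : Fin (k + 1) → ℤ) :
    Ik x y (k + 1) h = (Ik x y k (Fin.init h)).filter
      (fun m => m + h (Fin.last k) ∈ Ik x y k (Fin.init h)) := by
  ext m
  simp only [Finset.mem_filter, mem_Ik, Finset.mem_Ioc]
  constructor
  · intro H
    constructor
    · intro S
      have := H (S.map Fin.castSuccEmb)
      rw [Finset.sum_map] at this
      exact this
    · intro S
      have hnm : Fin.last k ∉ S.map Fin.castSuccEmb := by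
        simp only [Finset.mem_map]
        rintro ⟨j, -, hj⟩
        exact (Fin.castSucc_lt_last j).ne hj
      have := H (insert (Fin.last k) (S.map Fin.castSuccEmb))
      rw [Finset.sum_insert hnm, Finset.sum_map] at this
      have hconv : ∑ i ∈ S, h (Fin.castSuccEmb i) = ∑ i ∈ S, Fin.init h i := rfl
      rw [hconv] at this
      omega
  · rintro ⟨H1, H2⟩ S
    set S' := Finset.univ.filter (fun i : Fin k => i.castSucc ∈ S) with hS'
    have hsum : ∑ i ∈ S.erase (Fin.last k), h i = ∑ i ∈ S', Fin.init h i := by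
      rw [← map_castSuccEmb_filter k S, Finset.sum_map]
      rfl
    by_cases hl : Fin.last k ∈ S
    · have : ∑ i ∈ S, h i = h (Fin.last k) + ∑ i ∈ S.erase (Fin.last k), h i := by
        rw [Finset.add_sum_erase _ _ hl]
      have h2 := H2 S'
      rw [this, hsum]
      omega
    · have : S.erase (Fin.last k) = S := Finset.erase_eq_of_notMem hl
      have h1 := H1 S'
      rw [← this, hsum]
      omega

lemma weyl_sq (a : ℤ) (y : ℕ) (A : Finset ℤ) (hA : A ⊆ Finset.Ioc a (a + y)) (g : ℤ → ℝ) :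
    ‖∑ m ∈ A, e (g m)‖ ^ 2 ≤
      ∑ t ∈ Finset.Ioo (-(y : ℤ)) (y : ℤ),
        ‖∑ m ∈ A.filter (fun m => m + t ∈ A), e (g (m + t) - g m)‖ := by
  have key : (∑ m ∈ A, e (g m)) * (starRingEnd ℂ) (∑ m ∈ A, e (g m)) =
      ∑ t ∈ Finset.Ioo (-(y:ℤ)) (y:ℤ), ∑ m ∈ A.filter (fun m => m + t ∈ A),
        e (g (m + t) - g m) := by
    rw [map_sum, Finset.sum_mul_sum]
    rw [Finset.sum_congr rfl (fun m' _ => Finset.sum_congr rfl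
      (fun m _ => e_mul_conj (g m') (g m)))]
    rw [show (∑ m' ∈ A, ∑ m ∈ A, e (g m' - g m))
        = ∑ p ∈ A.sigma fun _ => A, e (g p.1 - g p.2) from by rw [Finset.sum_sigma]]
    rw [show (∑ t ∈ Finset.Ioo (-(y:ℤ)) (y:ℤ), ∑ m ∈ A.filter (fun m => m + t ∈ A),
          e (g (m + t) - g m))
        = ∑ p ∈ (Finset.Ioo (-(y:ℤ)) (y:ℤ)).sigma (fun t => A.filter (fun m => m + t ∈ A)),
          e (g (p.2 + p.1) - g p.2) from by rw [Finset.sum_sigma]]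
    refine Finset.sum_nbij' (fun p => ⟨p.1 - p.2, p.2⟩) (fun q => ⟨q.2 + q.1, q.2⟩)
      ?_ ?_ ?_ ?_ ?_
    · rintro ⟨m', m⟩ hp
      simp only [Finset.mem_sigma, Finset.mem_Ioo, Finset.mem_filter] at *
      obtain ⟨h1, h2⟩ := hp
      have c1 := hA h1; have c2 := hA h2
      simp only [Finset.mem_Ioc] at c1 c2
      refine ⟨⟨by omega, by omega⟩, h2, by simpa using h1⟩
    · rintro ⟨t, m⟩ hq
      simp only [Finset.mem_sigma, Finset.mem_filter] at hq ⊢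
      exact ⟨hq.2.2, hq.2.1⟩
    · rintro ⟨m', m⟩ _; simp
    · rintro ⟨t, m⟩ _; simp
    · rintro ⟨m', m⟩ _; simp
  calc ‖∑ m ∈ A, e (g m)‖ ^ 2
      = ‖(∑ m ∈ A, e (g m)) * (starRingEnd ℂ) (∑ m ∈ A, e (g m))‖ := by
        rw [norm_mul, Complex.norm_conj, sq]
    _ = ‖∑ t ∈ Finset.Ioo (-(y:ℤ)) (y:ℤ), ∑ m ∈ A.filter (fun m => m + t ∈ A),
          e (g (m + t) - g m)‖ := by rw [key]
    _ ≤ _ := norm_sum_le _ _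

lemma sum_piFinset_snoc {M : Type*} [AddCommMonoid M] (k : ℕ) (s : Finset ℤ)
    (F : (Fin (k + 1) → ℤ) → M) :
    ∑ h ∈ Fintype.piFinset (fun _ : Fin (k + 1) => s), F h =
      ∑ p ∈ Fintype.piFinset (fun _ : Fin k => s), ∑ t ∈ s, F (Fin.snoc p t) := by
  rw [show (∑ p ∈ Fintype.piFinset (fun _ : Fin k => s), ∑ t ∈ s, F (Fin.snoc p t))
      = ∑ q ∈ (Fintype.piFinset (fun _ : Fin k => s)) ×ˢ s, F (Fin.snoc q.1 q.2) from
      by rw [Finset.sum_product]]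
  refine Finset.sum_nbij' (fun h => (Fin.init h, h (Fin.last k)))
    (fun q => Fin.snoc q.1 q.2) ?_ ?_ ?_ ?_ ?_
  · intro h hh
    simp only [Fintype.mem_piFinset] at hh
    simp only [Finset.mem_product, Fintype.mem_piFinset]
    exact ⟨fun i => hh _, hh _⟩
  · rintro ⟨p, t⟩ hq
    simp only [Finset.mem_product, Fintype.mem_piFinset] at hq
    simp only [Fintype.mem_piFinset]
    intro i
    refine Fin.lastCases ?_ ?_ i
    · simpa using hq.2
    · intro j; simpa using hq.1 j
  · intro h _; exact Fin.snoc_init_self h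
  · rintro ⟨p, t⟩ _; simp [Fin.init_snoc, Fin.snoc_last]
  · intro h _; rw [Fin.snoc_init_self]

lemma weyl_main (g : ℝ → ℝ) (x y : ℕ) (hy : 0 < y) (k : ℕ) :
    ‖∑ m ∈ Finset.Ioc ((x : ℤ) - y) (x : ℤ), e (g (m : ℝ))‖ ^ (2 ^ k) ≤
      (2 * y : ℝ) ^ (2 ^ k - k - 1) *
        ∑ h ∈ Fintype.piFinset (fun _ : Fin k => Finset.Ioo (-(y : ℤ)) (y : ℤ)),
          ‖∑ m ∈ Ik x y k h, e (diffk k g (fun i => (h i : ℝ)) (m : ℝ))‖ := by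
  induction k with
  | zero =>
    have hpi : Fintype.piFinset (fun _ : Fin 0 => Finset.Ioo (-(y : ℤ)) (y : ℤ)) =
        Finset.univ := by
      ext h; simp [Fintype.mem_piFinset]
    rw [hpi]
    rw [Fintype.sum_unique (fun h : Fin 0 → ℤ =>
      ‖∑ m ∈ Ik x y 0 h, e (diffk 0 g (fun i => (h i : ℝ)) (m : ℝ))‖)]
    rw [Ik_zero]
    simp [diffk]
  | succ k IH =>
    set A := Finset.Ioc ((x : ℤ) - y) (x : ℤ) with hAdef
    set P := Fintype.piFinset (fun _ : Fin k => Finset.Ioo (-(y : ℤ)) (y : ℤ)) with hPdef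
    set T : (Fin k → ℤ) → ℝ := fun h =>
      ‖∑ m ∈ Ik x y k h, e (diffk k g (fun i => (h i : ℝ)) (m : ℝ))‖ with hTdef
    have hTnn : ∀ h, 0 ≤ T h := fun h => norm_nonneg _
    have hk2 : k + 1 ≤ 2 ^ k := Nat.lt_two_pow_self
    have h2y : (0:ℝ) ≤ 2 * y := by positivity
    -- card bound
    have hcard : ((P.card : ℝ)) ≤ (2 * y : ℝ) ^ k := by
      rw [hPdef, Fintype.card_piFinset]
      have : (Finset.Ioo (-(y : ℤ)) (y : ℤ)).card ≤ 2 * y := by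
        rw [Int.card_Ioo]; omega
      calc ((∏ _i : Fin k, (Finset.Ioo (-(y : ℤ)) (y : ℤ)).card : ℕ) : ℝ)
          ≤ ((∏ _i : Fin k, 2 * y : ℕ) : ℝ) := by
            exact Nat.cast_le.2 (Finset.prod_le_prod' (fun _ _ => this))
        _ = (2 * y : ℝ) ^ k := by push_cast; simp [Finset.prod_const]
    -- pointwise Weyl step
    have hpoint : ∀ h ∈ P, T h ^ 2 ≤
        ∑ t ∈ Finset.Ioo (-(y : ℤ)) (y : ℤ),
          ‖∑ m ∈ Ik x y (k+1) (Fin.snoc h t),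
            e (diffk (k+1) g (fun i => ((Fin.snoc h t : Fin (k+1) → ℤ) i : ℝ)) (m : ℝ))‖ := by
      intro h _
      have hw := weyl_sq ((x : ℤ) - y) y (Ik x y k h) (Ik_subset x y k h)
        (fun m : ℤ => diffk k g (fun i => (h i : ℝ)) (m : ℝ))
      refine hw.trans_eq (Finset.sum_congr rfl fun t _ => ?_)
      congr 1
      rw [show Ik x y (k+1) (Fin.snoc h t) = (Ik x y k h).filter
          (fun m => m + t ∈ Ik x y k h) by
        rw [Ik_succ]
        simp only [Fin.init_snoc, Fin.snoc_last]]
      refine Finset.sum_congr rfl fun m hm => ?_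
      congr 1
      push_cast
      show diffk k g (fun i => (h i : ℝ)) ((m:ℝ) + (t:ℝ)) - diffk k g (fun i => (h i : ℝ)) (m:ℝ)
        = diffk k g (fun i => ((Fin.snoc h t : Fin (k+1) → ℤ) i.castSucc : ℝ))
            ((m:ℝ) + ((Fin.snoc h t : Fin (k+1) → ℤ) (Fin.last k) : ℝ))
          - diffk k g (fun i => ((Fin.snoc h t : Fin (k+1) → ℤ) i.castSucc : ℝ)) (m:ℝ)
      rw [show (fun i : Fin k => ((Fin.snoc h t : Fin (k+1) → ℤ) i.castSucc : ℝ))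
          = fun i => (h i : ℝ) from funext fun i => by rw [Fin.snoc_castSucc],
        Fin.snoc_last]
    -- main chain
    calc ‖∑ m ∈ A, e (g (m : ℝ))‖ ^ (2 ^ (k+1))
        = (‖∑ m ∈ A, e (g (m : ℝ))‖ ^ (2 ^ k)) ^ 2 := by
          rw [← pow_mul, pow_succ]
      _ ≤ ((2 * y : ℝ) ^ (2 ^ k - k - 1) * ∑ h ∈ P, T h) ^ 2 := by
          apply pow_le_pow_left₀ (by positivity) IH
      _ = (2 * y : ℝ) ^ (2 * (2 ^ k - k - 1)) * (∑ h ∈ P, T h) ^ 2 := by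
          rw [mul_pow, ← pow_mul, mul_comm (2 ^ k - k - 1) 2]
      _ ≤ (2 * y : ℝ) ^ (2 * (2 ^ k - k - 1)) * (P.card * ∑ h ∈ P, T h ^ 2) := by
          apply mul_le_mul_of_nonneg_left _ (by positivity)
          exact sq_sum_le_card_mul_sum_sq
      _ ≤ (2 * y : ℝ) ^ (2 * (2 ^ k - k - 1)) * ((2 * y : ℝ) ^ k * ∑ h ∈ P, T h ^ 2) := by
          apply mul_le_mul_of_nonneg_left _ (by positivity)
          apply mul_le_mul_of_nonneg_right hcard
          exact Finset.sum_nonneg fun h _ => sq_nonneg _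
      _ = (2 * y : ℝ) ^ (2 ^ (k+1) - (k+1) - 1) * ∑ h ∈ P, T h ^ 2 := by
          rw [← mul_assoc, ← pow_add]
          congr 2
          omega
      _ ≤ (2 * y : ℝ) ^ (2 ^ (k+1) - (k+1) - 1) *
          ∑ h ∈ P, ∑ t ∈ Finset.Ioo (-(y : ℤ)) (y : ℤ),
            ‖∑ m ∈ Ik x y (k+1) (Fin.snoc h t),
              e (diffk (k+1) g (fun i => ((Fin.snoc h t : Fin (k+1) → ℤ) i : ℝ)) (m : ℝ))‖ := by
          apply mul_le_mul_of_nonneg_left _ (by positivity)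
          exact Finset.sum_le_sum hpoint
      _ = (2 * y : ℝ) ^ (2 ^ (k+1) - (k+1) - 1) *
          ∑ h ∈ Fintype.piFinset (fun _ : Fin (k+1) => Finset.Ioo (-(y : ℤ)) (y : ℤ)),
            ‖∑ m ∈ Ik x y (k+1) h,
              e (diffk (k+1) g (fun i => (h i : ℝ)) (m : ℝ))‖ := by
          rw [sum_piFinset_snoc]

theorem stmt_8 (n : ℕ) (hn : 2 ≤ n) (f : Polynomial ℝ) (hf : f.natDegree = n)
    (x y : ℕ) (hx : 0 < x) (hy : 0 < y) (hyx : y < x)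
    (k : ℕ) (hk1 : 1 ≤ k) (hkn : k ≤ n - 1) :
    ‖∑ m ∈ Finset.Ioc ((x : ℤ) - y) (x : ℤ), e (f.eval (m : ℝ))‖ ^ (2 ^ k) ≤
      (2 * y : ℝ) ^ (2 ^ k - k - 1) *
        ∑ h ∈ Fintype.piFinset (fun _ : Fin k => Finset.Ioo (-(y : ℤ)) (y : ℤ)),
          ‖∑ m ∈ Ik x y k h,
            e (diffk k (fun u => f.eval u) (fun i => (h i : ℝ)) (m : ℝ))‖ := by
  exact weyl_main (fun u => f.eval u) x y hy k
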